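/- Let Π = (V, Λ, C, dom, Bad) be a CSP whose dependency graph D := D_Π is locally finite, with maximum variable degree at most d+1 (i.e., |dom^{-1}(v)| ≤ d+1 for all v ∈ V). Let R ∈ ℕ and ε ∈ (0,1) be such that γ_D(R) < (1-ε)^{-R}, where γ_D is the growth function of D. If a table t : V → Λ^ℕ is (R, N, ε)-locally good for some N ∈ ℕ, then t is good, i.e., every f ∈ MTA(Π, t) is defined on all of V. -/

import Mathlib

open MeasureTheory Set
open scoped ENNReal

/-- A constraint satisfaction problem (CSP): variables `V`, labels `Λ`, constraints `C`.
`dom c` is the finite set of variables of the constraint `c`, and `Bad c` is the set of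
bad labelings `φ : dom c → Λ`. -/
structure CSP (V : Type*) (Λ : Type*) (C : Type*) where
  dom : C → Set V
  dom_finite : ∀ c, (dom c).Finite
  Bad : (c : C) → Set (↥(dom c) → Λ)

namespace CSP

variable {V Λ C : Type*}

/-- A labeling `f : V → Λ` violates the constraint `c` if its restriction to `dom c`
is a bad labeling. -/
def violates (Φ : CSP V Λ C) (f : V → Λ) (c : C) : Prop :=
  (fun v : ↥(Φ.dom c) => f v) ∈ Φ.Bad c

/-- A solution of a CSP: a labeling satisfying every constraint. -/
def IsSolution (Φ : CSP V Λ C) (f : V → Λ) : Prop := ∀ c, ¬ Φ.violates f c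

/-- The dependency graph of a CSP: distinct constraints are adjacent iff their domains meet. -/
def depGraph (Φ : CSP V Λ C) : SimpleGraph C where
  Adj c c' := c ≠ c' ∧ (Φ.dom c ∩ Φ.dom c').Nonempty
  symm := by
    constructor
    intro c c' h
    exact ⟨h.1.symm, by rw [Set.inter_comm]; exact h.2⟩
  loopless := ⟨fun c h => h.1 rfl⟩

/-- `P[Bad(c)]`: the probability of the set of bad labelings of `c` with respect to the
product measure `P^{dom c}`. -/
noncomputable def badProb [MeasurableSpace Λ] (Φ : CSP V Λ C) (P : Measure Λ) (c : C) : ℝ≥0∞ :=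
  haveI := (Φ.dom_finite c).fintype
  Measure.pi (fun _ : ↥(Φ.dom c) => P) (Φ.Bad c)

end CSP

/-- The ball of radius `R` around `c`: vertices joined to `c` by a path of at most `R` edges. -/
def gball {C : Type*} (G : SimpleGraph C) (c : C) : ℕ → Set C
  | 0 => {c}
  | R + 1 => gball G c R ∪ ⋃ x ∈ gball G c R, G.neighborSet x

lemma gball_finite {C : Type*} (G : SimpleGraph C)
    (hlf : ∀ v, (G.neighborSet v).Finite) (c : C) : ∀ R, (gball G c R).Finite
  | 0 => Set.finite_singleton c
  | (R + 1) => ((gball_finite G hlf c R).union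
      ((gball_finite G hlf c R).biUnion (fun x _ => hlf x)))

/-- The growth function `γ_G(R) = sup_v |B_G(v,R)|`, valued in `ℕ∞`. -/
noncomputable def growth {C : Type*} (G : SimpleGraph C) (R : ℕ) : ℕ∞ :=
  ⨆ v, (gball G v R).encard

/-- The exponential growth rate `egr(G) = inf_{R ≥ 1} γ_G(R)^{1/R}`, valued in `ℝ≥0∞`. -/
noncomputable def egr {C : Type*} (G : SimpleGraph C) : ℝ≥0∞ :=
  ⨅ R : {n : ℕ // 1 ≤ n}, ((growth G R.1 : ℝ≥0∞) ^ ((R.1 : ℝ)⁻¹))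

/-- The closed neighborhood `N[c]` of a vertex in a graph. -/
def closedNbhd {C : Type*} (G : SimpleGraph C) (c : C) : Set C :=
  insert c (G.neighborSet c)

/-- A set of vertices is independent if no two of its members are adjacent. -/
def IsIndep {C : Type*} (G : SimpleGraph C) (s : Set C) : Prop :=
  ∀ c ∈ s, ∀ c' ∈ s, ¬ G.Adj c c'

section BorelCSP

variable {V Λ C : Type*}

/-- The finite set obtained as the image of a tuple. -/
noncomputable def finsetOfTuple {X : Type*} (n : ℕ) (t : Fin n → X) : Finset X :=
  haveI := Classical.decEq X
  Finset.image t Finset.univ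

/-- The standard Borel structure on the space of finite subsets of `X`: a set of finite sets is
measurable iff for each `n` its preimage under the map `(x_1, …, x_n) ↦ {x_1, …, x_n}` is
measurable. -/
noncomputable def finsetMS (X : Type*) [MeasurableSpace X] : MeasurableSpace (Finset X) :=
  ⨅ n : ℕ, MeasurableSpace.map (finsetOfTuple (X := X) n) MeasurableSpace.pi

/-- The graph of a labeling `φ : dom c → Λ`, as a finite subset of `V × Λ`; this encodes a finite
partial function `V ⇀ Λ`. -/
noncomputable def CSP.graphOf (Φ : CSP V Λ C) (c : C) (φ : ↥(Φ.dom c) → Λ) :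
    Finset (V × Λ) :=
  haveI := Classical.decEq (V × Λ)
  (Φ.dom_finite c).toFinset.attach.image
    (fun v => (v.1, φ ⟨v.1, (Φ.dom_finite c).mem_toFinset.mp v.2⟩))

/-- A CSP on standard Borel spaces is Borel if `dom` is a Borel map into the space of finite
subsets of `V` and `{(c, φ) : φ ∈ Bad c}` is Borel in `C × (finite partial functions V ⇀ Λ)`,
finite partial functions being encoded by their graphs. -/
structure IsBorelCSP [MeasurableSpace V] [MeasurableSpace Λ] [MeasurableSpace C]
    (Φ : CSP V Λ C) : Prop where
  dom_meas : Measurable[_, finsetMS V] (fun c => (Φ.dom_finite c).toFinset)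
  bad_meas : MeasurableSet[(inferInstance : MeasurableSpace C).prod (finsetMS (V × Λ))]
    {p : C × Finset (V × Λ) | ∃ φ ∈ Φ.Bad p.1, p.2 = Φ.graphOf p.1 φ}

end BorelCSP

section MT

variable {V Λ C : Type*}

open scoped Classical

/-- The level function of the Moser–Tardos algorithm run with the sequence `I` of chosen
independent sets: `lev_0(v) = 0` and `lev_{n+1}(v) = lev_n(v) + 1` exactly when `v` belongs to the
domain of some constraint in `I n`. -/
noncomputable def MTlev (Φ : CSP V Λ C) (I : ℕ → Set C) : ℕ → V → ℕ
  | 0, _ => 0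
  | n + 1, v => MTlev Φ I n v + (if ∃ c ∈ I n, v ∈ Φ.dom c then 1 else 0)

/-- The labeling used at step `n` of the Moser–Tardos algorithm with table `t`. -/
noncomputable def CSP.MTstep (Φ : CSP V Λ C) (t : V → ℕ → Λ) (I : ℕ → Set C)
    (n : ℕ) : V → Λ :=
  fun v => t v (MTlev Φ I n v)

/-- An MT-sequence `I` is consistent with `(Φ, t)` if it can be produced by the Moser–Tardos
algorithm on input `(Φ, t)`: each `I n` is an independent set of constraints violated by the
current labeling. -/
noncomputable def CSP.Consistent (Φ : CSP V Λ C) (t : V → ℕ → Λ) (I : ℕ → Set C) : Prop :=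
  (∀ n, IsIndep Φ.depGraph (I n)) ∧ ∀ n, ∀ c ∈ I n, Φ.violates (Φ.MTstep t I n) c

/-- An MT-sequence consistent with `(Φ, t)` that can be produced by the *maximal* Moser–Tardos
algorithm: each `I n` is a maximal independent subset of the set of violated constraints. -/
noncomputable def CSP.MaximalCons (Φ : CSP V Λ C) (t : V → ℕ → Λ) (I : ℕ → Set C) : Prop :=
  Φ.Consistent t I ∧
    ∀ n, ∀ c, Φ.violates (Φ.MTstep t I n) c → c ∉ I n → ∃ c' ∈ I n, Φ.depGraph.Adj c c'

/-- The levels at `v` stabilize, i.e. `lev(v) = lim_n lev_n(v) < ∞`: the output labeling of the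
run of the Moser–Tardos algorithm is defined at `v`. -/
def StabilizesAt (Φ : CSP V Λ C) (I : ℕ → Set C) (v : V) : Prop :=
  ∃ N, ∀ n, N ≤ n → MTlev Φ I n v = MTlev Φ I N v

/-- A table is good if every run of the Moser–Tardos algorithm on `(Φ, t)` produces a labeling
defined on all of `V`. -/
def CSP.GoodTable (Φ : CSP V Λ C) (t : V → ℕ → Λ) : Prop :=
  ∀ I : ℕ → Set C, Φ.Consistent t I → ∀ v, StabilizesAt Φ I v

/-- The `(c, r)`-local CSP `Π_{c,r}`: constraints at distance more than `r` from `c` in the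
dependency graph are always violated. -/
noncomputable def CSP.localCSP (Φ : CSP V Λ C) (c : C) (r : ℕ) : CSP V Λ C where
  dom := Φ.dom
  dom_finite := Φ.dom_finite
  Bad a := if a ∈ gball Φ.depGraph c r then Φ.Bad a else Set.univ

/-- A finite MT-sequence: `Σ_n |I_n| < ∞`. -/
def FiniteMTSeq {C : Type*} (I : ℕ → Set C) : Prop :=
  {q : C × ℕ | q.1 ∈ I q.2}.Finite

/-- A finite MT-sequence is `(c, r, N, ε)`-Følner if `Σ_n |I_n ∩ B_D(c,r)| ≥ N` and
`Σ_n |I_n \ B_D(c,r)| < ε · Σ_n |I_n|`. -/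
def CSP.Folner (Φ : CSP V Λ C) (I : ℕ → Set C) (c : C) (r N : ℕ) (ε : ℝ) : Prop :=
  FiniteMTSeq I ∧
    N ≤ {q : C × ℕ | q.1 ∈ I q.2 ∧ q.1 ∈ gball Φ.depGraph c r}.ncard ∧
    ({q : C × ℕ | q.1 ∈ I q.2 ∧ q.1 ∉ gball Φ.depGraph c r}.ncard : ℝ) <
      ε * ({q : C × ℕ | q.1 ∈ I q.2}.ncard : ℝ)

/-- A table is `(c, R, N, ε)`-locally good if for all `r < R` there is no `(c, r, N, ε)`-Følner
MT-sequence consistent with `(Φ_{c,r}, t)`. -/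
noncomputable def CSP.LocallyGoodAt (Φ : CSP V Λ C) (t : V → ℕ → Λ) (c : C) (R N : ℕ)
    (ε : ℝ) : Prop :=
  ∀ r < R, ¬ ∃ I : ℕ → Set C, (Φ.localCSP c r).Consistent t I ∧ Φ.Folner I c r N ε

/-- A table is `(R, N, ε)`-locally good if it is `(c, R, N, ε)`-locally good for every `c`. -/
noncomputable def CSP.LocallyGood (Φ : CSP V Λ C) (t : V → ℕ → Λ) (R N : ℕ) (ε : ℝ) : Prop :=
  ∀ c, Φ.LocallyGoodAt t c R N ε

/-- `dom_R(c) = ⋃_{a ∈ B_D(c,R)} dom(a)`. -/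
def CSP.domR (Φ : CSP V Λ C) (c : C) (R : ℕ) : Set V :=
  ⋃ a ∈ gball Φ.depGraph c R, Φ.dom a

lemma CSP.domR_finite (Φ : CSP V Λ C) (hlf : ∀ c, (Φ.depGraph.neighborSet c).Finite)
    (c : C) (R : ℕ) : (Φ.domR c R).Finite :=
  (gball_finite _ hlf c R).biUnion (fun a _ => Φ.dom_finite a)

/-- The set `LBad_{R,N,ε}(c)` of partial tables `φ : dom_R(c) → Λ^ℕ` such that some
(equivalently, every) table extending `φ` is not `(c, R, N, ε)`-locally good. -/
noncomputable def CSP.LBad (Φ : CSP V Λ C) (c : C) (R N : ℕ) (ε : ℝ) :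
    Set (↥(Φ.domR c R) → ℕ → Λ) :=
  {φ | ∃ t : V → ℕ → Λ, (∀ v : ↥(Φ.domR c R), t v = φ v) ∧
    ¬ Φ.LocallyGoodAt t c R N ε}

/-- The CSP `LG(R, N, ε)` whose solutions are exactly the `(R, N, ε)`-locally good tables. -/
noncomputable def CSP.LG (Φ : CSP V Λ C) (R N : ℕ) (ε : ℝ)
    (h : ∀ c, (Φ.domR c R).Finite) : CSP V (ℕ → Λ) C where
  dom c := Φ.domR c R
  dom_finite := h
  Bad c := Φ.LBad c R N ε

end MT

/-- `Q` is the product of copies of `P` over the index set `ι`: the measure of every measurable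
cylinder is the corresponding finite product. -/
def IsProductOf {ι Λ : Type*} [MeasurableSpace Λ] (Q : Measure (ι → Λ)) (P : Measure Λ) : Prop :=
  ∀ (s : Finset ι) (A : ι → Set Λ), (∀ i ∈ s, MeasurableSet (A i)) →
    Q {g | ∀ i ∈ s, g i ∈ A i} = ∏ i ∈ s, P (A i)


section LGIGAux

variable {V Λ C : Type*}

lemma LGIG_self_mem_gball (G : SimpleGraph C) (c : C) : ∀ r, c ∈ gball G c r
  | 0 => rfl
  | r + 1 => Set.mem_union_left _ (LGIG_self_mem_gball G c r)

lemma LGIG_mem_gball_succ_of_adj {G : SimpleGraph C} {c x y : C} {r : ℕ}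
    (hx : x ∈ gball G c r) (h : G.Adj x y) : y ∈ gball G c (r + 1) :=
  Set.mem_union_right _ (Set.mem_biUnion hx h)

lemma LGIG_gball_subset_succ (G : SimpleGraph C) (c : C) (r : ℕ) :
    gball G c r ⊆ gball G c (r + 1) := Set.subset_union_left

lemma LGIG_localCSP_dom (Φ : CSP V Λ C) (c : C) (r : ℕ) :
    (Φ.localCSP c r).dom = Φ.dom := rfl

lemma LGIG_localCSP_depGraph (Φ : CSP V Λ C) (c : C) (r : ℕ) :
    (Φ.localCSP c r).depGraph = Φ.depGraph := rfl

lemma LGIG_localCSP_MTlev (Φ : CSP V Λ C) (c : C) (r : ℕ) (I : ℕ → Set C)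
    (n : ℕ) (w : V) : MTlev (Φ.localCSP c r) I n w = MTlev Φ I n w := by
  induction n with
  | zero => rfl
  | succ n ih =>
    simp only [MTlev, ih]
    rfl

end LGIGAux

/-- **Lemma.** Let `R ∈ ℕ` and `ε ∈ (0,1)` with `γ_D(R) < (1-ε)^{-R}`, where the maximum variable
degree of `Φ` is at most `d+1`. If a table `t` is `(R, N, ε)`-locally good for some `N`, then `t`
is good. -/
theorem locally_good_implies_good
    {V Λ C : Type*} (Φ : CSP V Λ C) (d : ℕ)
    (hlf : ∀ c, (Φ.depGraph.neighborSet c).Finite)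
    (hvdeg : ∀ v : V, {c : C | v ∈ Φ.dom c}.encard ≤ d + 1)
    (R N : ℕ) (ε : ℝ) (hε0 : 0 < ε) (hε1 : ε < 1)
    (hγ : (growth Φ.depGraph R : ℝ≥0∞) < ENNReal.ofReal ((1 - ε)⁻¹ ^ R))
    (t : V → ℕ → Λ) (ht : Φ.LocallyGood t R N ε) :
    Φ.GoodTable t := by
  classical
  intro I hI v
  by_contra hns
  -- Step 1: infinitely many increment steps at v
  have hDinf : {n : ℕ | ∃ c ∈ I n, v ∈ Φ.dom c}.Infinite := by
    by_contra hfin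
    rw [Set.not_infinite] at hfin
    obtain ⟨bd, hbd⟩ := hfin.bddAbove
    refine hns ⟨bd + 1, fun n hn => ?_⟩
    induction n with
    | zero => omega
    | succ n ih =>
      rcases Nat.lt_or_ge n (bd + 1) with h | h
      · have : n + 1 = bd + 1 := by omega
        rw [this]
      · have hnot : ¬ ∃ c ∈ I n, v ∈ Φ.dom c := by
          intro hc
          have := hbd hc
          omega
        have ihn := ih h
        simp [MTlev, hnot, ihn]
  -- Step 1b: pigeonhole, some constraint containing v appears infinitely often
  have hFfin : {c : C | v ∈ Φ.dom c}.Finite := by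
    rw [← Set.encard_lt_top_iff]
    refine (hvdeg v).trans_lt ?_
    have h1 : ((d : ℕ∞) + 1) = ((d + 1 : ℕ) : ℕ∞) := by push_cast; ring
    rw [h1]
    exact WithTop.coe_lt_top _
  obtain ⟨c₀, hc₀dom, hc₀inf⟩ :
      ∃ c₀, v ∈ Φ.dom c₀ ∧ {n : ℕ | c₀ ∈ I n}.Infinite := by
    by_contra hno
    push_neg at hno
    refine hDinf ?_
    have hsub : {n : ℕ | ∃ c ∈ I n, v ∈ Φ.dom c} ⊆
        ⋃ c ∈ {c : C | v ∈ Φ.dom c}, {n : ℕ | c ∈ I n} := by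
      rintro n ⟨c, hcI, hcv⟩
      exact Set.mem_biUnion hcv hcI
    refine Set.Finite.subset (hFfin.biUnion fun c hc => ?_) hsub
    exact hno c hc
  -- Step 2: cutoff m and multiplicities
  obtain ⟨S, hSsub, hScard⟩ := hc₀inf.exists_subset_card_eq (max N 1)
  set m : ℕ := S.sup id + 1 with hm
  set mult : C → ℕ := fun x => ((Finset.range m).filter (fun n => x ∈ I n)).card
    with hmultdef
  have hmult_le : ∀ x, mult x ≤ m := fun x =>
    (Finset.card_filter_le _ _).trans (by simp)
  have hmultc₀ : max N 1 ≤ mult c₀ := by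
    rw [← hScard]
    apply Finset.card_le_card
    intro n hn
    simp only [hmultdef, Finset.mem_filter, Finset.mem_range]
    refine ⟨Nat.lt_succ_of_le (Finset.le_sup (f := id) hn), ?_⟩
    exact hSsub hn
  -- Step 3: maximal multiplicity
  have hMbdd : BddAbove (Set.range mult) := ⟨m, by rintro k ⟨x, rfl⟩; exact hmult_le x⟩
  have hMne : (Set.range mult).Nonempty := ⟨mult c₀, c₀, rfl⟩
  obtain ⟨a, ha⟩ : ∃ a, mult a = sSup (Set.range mult) :=
    Set.mem_range.mp (Nat.sSup_mem hMne hMbdd)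
  set M : ℕ := sSup (Set.range mult) with hMdef
  have hmult_leM : ∀ x, mult x ≤ M := fun x => le_csSup hMbdd ⟨x, rfl⟩
  have hMN : max N 1 ≤ M := le_trans hmultc₀ (hmult_leM c₀)
  -- Step 4: balls and counting finsets
  have hballfin : ∀ r, (gball Φ.depGraph a r).Finite := gball_finite _ hlf a
  set Bfin : ℕ → Finset C := fun r => (hballfin r).toFinset with hBfindef
  set Tfin : ℕ → Finset (C × ℕ) :=
    fun r => (Bfin r ×ˢ Finset.range m).filter (fun q => q.1 ∈ I q.2) with hTfindef
  have hmemT : ∀ r q, q ∈ Tfin r ↔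
      q.1 ∈ gball Φ.depGraph a r ∧ q.2 < m ∧ q.1 ∈ I q.2 := by
    intro r q
    simp [hTfindef, hBfindef, Finset.mem_filter, Finset.mem_product,
      Set.Finite.mem_toFinset, Finset.mem_range, and_assoc]
  have hTsub : ∀ r, Tfin r ⊆ Tfin (r + 1) := by
    intro r q hq
    rw [hmemT] at hq ⊢
    exact ⟨LGIG_gball_subset_succ _ _ _ hq.1, hq.2⟩
  have hTcard : ∀ r, (Tfin r).card = ∑ x ∈ Bfin r, mult x := by
    intro r
    rw [Finset.card_eq_sum_card_fiberwise (f := Prod.fst) (t := Bfin r)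
      (fun q hq => (Finset.mem_product.mp (Finset.mem_filter.mp hq).1).1)]
    refine Finset.sum_congr rfl fun x hx => ?_
    refine Finset.card_bij (fun q _ => q.2) ?_ ?_ ?_
    · intro q hq
      simp only [Finset.mem_filter, Finset.mem_product, Finset.mem_range] at hq
      simp only [hmultdef, Finset.mem_filter, Finset.mem_range]
      exact ⟨hq.1.1.2, hq.2 ▸ hq.1.2⟩
    · intro q hq q' hq' h
      simp only [Finset.mem_filter] at hq hq'
      exact Prod.ext (hq.2.trans hq'.2.symm) h
    · intro n hn
      simp only [hmultdef, Finset.mem_filter, Finset.mem_range] at hn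
      refine ⟨(x, n), ?_, rfl⟩
      simp only [Finset.mem_filter, Finset.mem_product, Finset.mem_range]
      exact ⟨⟨⟨hx, hn.1⟩, hn.2⟩, trivial⟩
  have hT0 : (Tfin 0).card = M := by
    rw [hTcard]
    have hB0 : Bfin 0 = {a} := by
      ext x
      simp [hBfindef, Set.Finite.mem_toFinset, gball]
    rw [hB0, Finset.sum_singleton, ha]
  have hTR_le : (Tfin R).card ≤ (Bfin R).card * M := by
    rw [hTcard]
    calc ∑ x ∈ Bfin R, mult x ≤ ∑ _x ∈ Bfin R, M :=
          Finset.sum_le_sum fun x _ => hmult_leM x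
      _ = (Bfin R).card * M := by rw [Finset.sum_const, smul_eq_mul]
  have hTmono : ∀ r, (Tfin r).card ≤ (Tfin (r + 1)).card :=
    fun r => Finset.card_le_card (hTsub r)
  have hNT : ∀ r, N ≤ (Tfin r).card := by
    intro r
    induction r with
    | zero => rw [hT0]; exact le_trans (le_max_left _ _) hMN
    | succ r ih => exact le_trans ih (hTmono r)
  -- Step 5: the key inequality from local goodness
  have hkey : ∀ r < R, ((Tfin r).card : ℝ) ≤ (1 - ε) * (Tfin (r + 1)).card := by
    intro r hr
    set J : ℕ → Set C := fun n =>
      if n < m then I n ∩ gball Φ.depGraph a (r + 1) else ∅ with hJdef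
    have hJI : ∀ n, J n ⊆ I n := by
      intro n x hx
      simp only [hJdef] at hx
      split_ifs at hx with h
      · exact hx.1
      · exact absurd hx (Set.notMem_empty x)
    have hJmem : ∀ n x, x ∈ J n ↔
        n < m ∧ x ∈ I n ∧ x ∈ gball Φ.depGraph a (r + 1) := by
      intro n x
      simp only [hJdef]
      split_ifs with h
      · simp [h, and_assoc]
      · simp [h]
    have hlev : ∀ x ∈ gball Φ.depGraph a r, ∀ w ∈ Φ.dom x, ∀ n ≤ m,
        MTlev Φ J n w = MTlev Φ I n w := by
      intro x hx w hw n hn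
      induction n with
      | zero => rfl
      | succ n ih =>
        have hn' : n ≤ m := Nat.le_of_succ_le hn
        have hcond : (∃ c ∈ J n, w ∈ Φ.dom c) ↔ (∃ c ∈ I n, w ∈ Φ.dom c) := by
          constructor
          · rintro ⟨c, hc, hcw⟩
            exact ⟨c, hJI n hc, hcw⟩
          · rintro ⟨c, hc, hcw⟩
            refine ⟨c, (hJmem n c).mpr ⟨by omega, hc, ?_⟩, hcw⟩
            by_cases hcx : c = x
            · exact hcx ▸ LGIG_gball_subset_succ _ _ _ hx
            · have hadj : Φ.depGraph.Adj x c := ⟨fun h => hcx h.symm, ⟨w, hw, hcw⟩⟩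
              exact LGIG_mem_gball_succ_of_adj hx hadj
        simp only [MTlev, ih hn', hcond]
    have hcons : (Φ.localCSP a r).Consistent t J := by
      constructor
      · intro n c hc c' hc' hadj
        exact hI.1 n c (hJI n hc) c' (hJI n hc') hadj
      · intro n x hx
        obtain ⟨hnm, hxI, hxball⟩ := (hJmem n x).mp hx
        show (fun w : ↥(Φ.dom x) => (Φ.localCSP a r).MTstep t J n w.1)
            ∈ (Φ.localCSP a r).Bad x
        have hbadeq : (Φ.localCSP a r).Bad x
            = if x ∈ gball Φ.depGraph a r then Φ.Bad x else Set.univ := rfl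
        by_cases hxr : x ∈ gball Φ.depGraph a r
        · rw [hbadeq, if_pos hxr]
          have hviol := hI.2 n x hxI
          have heq : (fun w : ↥(Φ.dom x) => (Φ.localCSP a r).MTstep t J n w.1)
              = (fun w : ↥(Φ.dom x) => Φ.MTstep t I n w.1) := by
            funext w
            show t w.1 (MTlev (Φ.localCSP a r) J n w.1) = t w.1 (MTlev Φ I n w.1)
            rw [LGIG_localCSP_MTlev, hlev x hxr w.1 w.2 n (le_of_lt hnm)]
          rw [heq]
          exact hviol
        · rw [hbadeq, if_neg hxr]
          trivial
    have hnotF : ¬ Φ.Folner J a r N ε := by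
      intro hF
      exact ht a r hr ⟨J, hcons, hF⟩
    have hset1 : {q : C × ℕ | q.1 ∈ J q.2} = ↑(Tfin (r + 1)) := by
      ext q
      rw [Finset.mem_coe, hmemT, Set.mem_setOf_eq, hJmem]
      tauto
    have hset2 : {q : C × ℕ | q.1 ∈ J q.2 ∧ q.1 ∈ gball Φ.depGraph a r}
        = ↑(Tfin r) := by
      ext q
      rw [Finset.mem_coe, hmemT, Set.mem_setOf_eq, hJmem]
      constructor
      · rintro ⟨⟨h1, h2, _⟩, h4⟩
        exact ⟨h4, h1, h2⟩
      · rintro ⟨h1, h2, h3⟩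
        exact ⟨⟨h2, h3, LGIG_gball_subset_succ _ _ _ h1⟩, h1⟩
    have hset3 : {q : C × ℕ | q.1 ∈ J q.2 ∧ q.1 ∉ gball Φ.depGraph a r}
        = ↑(Tfin (r + 1) \ Tfin r) := by
      ext q
      rw [Finset.mem_coe, Finset.mem_sdiff, hmemT, hmemT, Set.mem_setOf_eq, hJmem]
      tauto
    have hFin : FiniteMTSeq J := by
      rw [FiniteMTSeq, hset1]
      exact (Tfin (r + 1)).finite_toSet
    have hNle : N ≤ {q : C × ℕ | q.1 ∈ J q.2 ∧ q.1 ∈ gball Φ.depGraph a r}.ncard := by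
      rw [hset2, Set.ncard_coe_finset]
      exact hNT r
    have hthird : ¬ (({q : C × ℕ | q.1 ∈ J q.2 ∧ q.1 ∉ gball Φ.depGraph a r}.ncard : ℝ) <
        ε * ({q : C × ℕ | q.1 ∈ J q.2}.ncard : ℝ)) := by
      intro hlt
      exact hnotF ⟨hFin, hNle, hlt⟩
    rw [hset3, hset1, Set.ncard_coe_finset, Set.ncard_coe_finset] at hthird
    push_neg at hthird
    rw [Finset.card_sdiff_of_subset (hTsub r)] at hthird
    have hsub_cast : (((Tfin (r + 1)).card - (Tfin r).card : ℕ) : ℝ)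
        = ((Tfin (r + 1)).card : ℝ) - (Tfin r).card := by
      rw [Nat.cast_sub (hTmono r)]
    rw [hsub_cast] at hthird
    linarith
  -- Step 6: iterate, reach a contradiction with the growth bound
  have h1e : (0 : ℝ) < 1 - ε := by linarith
  have hiter : ∀ r ≤ R, ((Tfin 0).card : ℝ) ≤ (1 - ε) ^ r * (Tfin r).card := by
    intro r hr
    induction r with
    | zero => simp
    | succ r ih =>
      have h1 := ih (Nat.le_of_succ_le hr)
      have h2 := hkey r (Nat.lt_of_succ_le hr)
      have hpos : (0 : ℝ) ≤ (1 - ε) ^ r := pow_nonneg h1e.le r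
      calc ((Tfin 0).card : ℝ) ≤ (1 - ε) ^ r * (Tfin r).card := h1
        _ ≤ (1 - ε) ^ r * ((1 - ε) * (Tfin (r + 1)).card) :=
            mul_le_mul_of_nonneg_left h2 hpos
        _ = (1 - ε) ^ (r + 1) * (Tfin (r + 1)).card := by ring
  have hMpos : (0 : ℝ) < (M : ℝ) := by
    have h1 : 1 ≤ M := le_trans (le_max_right N 1) hMN
    exact_mod_cast Nat.lt_of_lt_of_le Nat.zero_lt_one h1
  have hfinal : ((1 - ε)⁻¹ ^ R : ℝ) ≤ ((Bfin R).card : ℝ) := by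
    have h0 := hiter R le_rfl
    rw [hT0] at h0
    have hRle : ((Tfin R).card : ℝ) ≤ ((Bfin R).card : ℝ) * M := by
      exact_mod_cast hTR_le
    have hpowpos : (0 : ℝ) < (1 - ε) ^ R := pow_pos h1e R
    have h1le : (1 : ℝ) ≤ (1 - ε) ^ R * (Bfin R).card := by
      nlinarith
    rw [inv_pow, inv_eq_one_div, div_le_iff₀ hpowpos]
    nlinarith
  have hle1 : ENNReal.ofReal ((1 - ε)⁻¹ ^ R) ≤ (((Bfin R).card : ℕ) : ℝ≥0∞) := by
    rw [← ENNReal.ofReal_natCast]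
    exact ENNReal.ofReal_le_ofReal hfinal
  have hle2 : (((Bfin R).card : ℕ) : ℝ≥0∞) ≤ (growth Φ.depGraph R : ℝ≥0∞) := by
    have h1 : (gball Φ.depGraph a R).encard ≤ growth Φ.depGraph R :=
      le_iSup (fun u => (gball Φ.depGraph u R).encard) a
    have h2 : (gball Φ.depGraph a R).encard = ((Bfin R).card : ℕ∞) :=
      (hballfin R).encard_eq_coe_toFinset_card
    rw [h2] at h1
    calc (((Bfin R).card : ℕ) : ℝ≥0∞) = ((((Bfin R).card : ℕ) : ℕ∞) : ℝ≥0∞) := by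
          rw [ENat.toENNReal_coe]
      _ ≤ (growth Φ.depGraph R : ℝ≥0∞) := ENat.toENNReal_le.mpr h1
  exact absurd hγ (not_lt.mpr (hle1.trans hle2))
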